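/- Let X ⪰ 0 be an n×n rank-k PSD matrix with k > r, and X* a rank-r PSD matrix. Then ‖X_r − X*‖_F ≤ 2√r·‖X − X*‖_F, where X_r is the best rank-r approximation of X. -/

import Mathlib

open Matrix

noncomputable def vnorm {m : Type*} [Fintype m] (v : m → ℝ) : ℝ :=
  Real.sqrt (∑ i, v i ^ 2)

noncomputable def frob {m n : Type*} [Fintype m] [Fintype n] (A : Matrix m n ℝ) : ℝ :=
  Real.sqrt (∑ i, ∑ j, A i j ^ 2)

/-- The spectral norm (largest singular value) of a real matrix. -/
noncomputable def specNorm {m n : Type*} [Fintype m] [Fintype n] (A : Matrix m n ℝ) : ℝ :=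
  sSup {c | ∃ x : n → ℝ, vnorm x = 1 ∧ c = vnorm (A.mulVec x)}

/-- The smallest singular value of a real matrix. -/
noncomputable def sigMin {m n : Type*} [Fintype m] [Fintype n] (A : Matrix m n ℝ) : ℝ :=
  sInf {c | ∃ x : n → ℝ, vnorm x = 1 ∧ c = vnorm (A.mulVec x)}

/-- `Dist U V`: the infimum of `‖U - V R‖_F` over orthogonal `R`. -/
noncomputable def FDist {n r : Type*} [Fintype n] [Fintype r] [DecidableEq r]
    (U V : Matrix n r ℝ) : ℝ :=
  sInf {c | ∃ R : Matrix r r ℝ, Rᵀ * R = 1 ∧ c = frob (U - V * R)}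

/-- The `i`-th largest singular value of a real matrix. -/
noncomputable def singVal {n m : ℕ} (A : Matrix (Fin n) (Fin m) ℝ) (i : Fin m) : ℝ :=
  Real.sqrt ((Matrix.isHermitian_conjTranspose_mul_self A).eigenvalues
    ((Tuple.sort (Matrix.isHermitian_conjTranspose_mul_self A).eigenvalues) i.rev))


lemma rank_zero_eq_zero {n : ℕ} {A : Matrix (Fin n) (Fin n) ℝ} (h : A.rank = 0) :
    A = 0 := by
  rw [Matrix.rank, Submodule.finrank_eq_zero, LinearMap.range_eq_bot] at h
  ext i j
  have := congrFun (congrArg (fun f => f.toFun) h) (Pi.single j 1)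
  have h2 := congrFun this i
  simpa [Matrix.mulVecLin, Matrix.mulVec_single] using h2

lemma frob_eq_norm {m n : Type*} [Fintype m] [Fintype n] (A : Matrix m n ℝ) :
    frob A = ‖(WithLp.equiv 2 ((m × n) → ℝ)).symm (fun p => A p.1 p.2)‖ := by
  rw [EuclideanSpace.norm_eq, frob, Fintype.sum_prod_type]
  simp [Real.norm_eq_abs, sq_abs]

lemma frob_nonneg {m n : Type*} [Fintype m] [Fintype n] (A : Matrix m n ℝ) :
    0 ≤ frob A := Real.sqrt_nonneg _

lemma frob_neg {m n : Type*} [Fintype m] [Fintype n] (A : Matrix m n ℝ) :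
    frob (-A) = frob A := by
  simp [frob]

lemma frob_triangle {m n : Type*} [Fintype m] [Fintype n] (A B : Matrix m n ℝ) :
    frob (A + B) ≤ frob A + frob B := by
  rw [frob_eq_norm, frob_eq_norm, frob_eq_norm]
  have : ((WithLp.equiv 2 ((m × n) → ℝ)).symm (fun p => (A + B) p.1 p.2))
      = (WithLp.equiv 2 ((m × n) → ℝ)).symm (fun p => A p.1 p.2)
        + (WithLp.equiv 2 ((m × n) → ℝ)).symm (fun p => B p.1 p.2) := by
    ext p; simp [Matrix.add_apply]
  rw [this]
  exact norm_add_le _ _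

/-- For PSD `X` of rank `k > r` and rank-`r` PSD `X*`, the best rank-`r`
approximation `X_r` of `X` (truncated eigendecomposition) satisfies
`‖X_r - X*‖_F ≤ 2 √r ‖X - X*‖_F`. -/
theorem stmt15 {n : ℕ} (r k : ℕ) (hrk : r < k)
    (X Xstar Xr : Matrix (Fin n) (Fin n) ℝ)
    (hX : X.PosSemidef) (hXrank : X.rank = k)
    (hXs : Xstar.PosSemidef) (hXsrank : Xstar.rank = r)
    (hXr1 : Xr.PosSemidef) (hXr2 : (X - Xr).PosSemidef)
    (hXr3 : Xr * (X - Xr) = 0) (hXrrank : Xr.rank ≤ r)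
    (hbest : ∀ Z : Matrix (Fin n) (Fin n) ℝ, Z.rank ≤ r →
      frob (X - Xr) ≤ frob (X - Z)) :
    frob (Xr - Xstar) ≤ 2 * Real.sqrt r * frob (X - Xstar) := by
  rcases Nat.eq_zero_or_pos r with hr | hr
  · subst hr
    have hXs0 : Xstar = 0 := by
      exact rank_zero_eq_zero hXsrank
    have hXr0 : Xr = 0 := rank_zero_eq_zero (Nat.le_zero.mp hXrrank)
    simp [hXs0, hXr0, frob]
  · have h1 : frob (Xr - Xstar) ≤ frob (Xr - X) + frob (X - Xstar) := by
      have : Xr - Xstar = (Xr - X) + (X - Xstar) := by abel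
      rw [this]; exact frob_triangle _ _
    have h2 : frob (Xr - X) = frob (X - Xr) := by
      rw [show Xr - X = -(X - Xr) by abel, frob_neg]
    have h3 : frob (X - Xr) ≤ frob (X - Xstar) := hbest Xstar (le_of_eq hXsrank)
    have h4 : (1 : ℝ) ≤ Real.sqrt r := by
      rw [show (1:ℝ) = Real.sqrt 1 by simp]
      exact Real.sqrt_le_sqrt (by exact_mod_cast hr)
    have h5 : frob (Xr - Xstar) ≤ 2 * frob (X - Xstar) := by
      rw [two_mul]; linarith
    calc frob (Xr - Xstar) ≤ 2 * frob (X - Xstar) := h5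
      _ ≤ 2 * Real.sqrt r * frob (X - Xstar) := by
          nlinarith [frob_nonneg (X - Xstar)]
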